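/- Let C be a τ-compact subset of a normed space E whose norm is τ-lower semicontinuous, and let S be a family of τ-continuous self-maps of C such that for every finite subfamily A ⊆ S, Fix A is a nonexpansive retract of C. Then Fix S is a nonexpansive retract of C (in particular nonempty). -/

import Mathlib

/-- `D` is a (nonvoid) nonexpansive retract of `C`: there is a map `R` of `C` onto `D`,
nonexpansive on `C`, restricting to the identity on `D`. -/
def IsNonexpansiveRetract {E : Type*} [NormedAddCommGroup E] [NormedSpace ℝ E]
    (D C : Set E) : Prop :=
  D.Nonempty ∧ D ⊆ C ∧
    ∃ R : E → E, R '' C = D ∧ (∀ x ∈ D, R x = x) ∧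
      ∀ x ∈ C, ∀ y ∈ C, ‖R x - R y‖ ≤ ‖x - y‖

/-- If `C` is `τ`-compact, the norm is `τ`-lower semicontinuous, and the common fixed
point set of every finite subfamily of the `τ`-continuous family `S` is a nonexpansive
retract of `C`, then `Fix S` is a nonexpansive retract of `C` (in particular nonempty). -/
theorem fix_family_nonexpansive_retract_of_finite
    {E : Type*} [NormedAddCommGroup E] [NormedSpace ℝ E]
    (t : TopologicalSpace E) (ht2 : @T2Space E t)
    (htgrp : @IsTopologicalAddGroup E t _)
    (hlsc : @LowerSemicontinuous E ℝ t _ (fun x => ‖x‖))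
    (C : Set E) (hC : @IsCompact E t C)
    (S : Set (E → E))
    (hmaps : ∀ T ∈ S, Set.MapsTo T C C)
    (hcont : ∀ T ∈ S, @ContinuousOn E E t t T C)
    (hfin : ∀ A ⊆ S, A.Finite →
      IsNonexpansiveRetract {x ∈ C | ∀ T ∈ A, T x = x} C) :
    IsNonexpansiveRetract {x ∈ C | ∀ T ∈ S, T x = x} C := by
  classical
  letI : TopologicalSpace E := t
  haveI : T2Space E := ht2
  haveI : IsTopologicalAddGroup E := htgrp
  -- C is nonempty (take A = ∅)
  obtain ⟨x0, hx0⟩ : C.Nonempty := by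
    obtain ⟨⟨x, hx⟩, -, -⟩ := hfin ∅ (Set.empty_subset S) Set.finite_empty
    exact ⟨x, hx.1⟩
  letI : DecidableEq (E → E) := Classical.decEq _
  -- the directed set of finite subfamilies
  set ι := {A : Finset (E → E) // ↑A ⊆ S} with hι
  haveI : Nonempty ι := ⟨⟨∅, by simp⟩⟩
  letI : SemilatticeSup ι := Subtype.semilatticeSup (by
    intro x y hx hy
    simp only [Finset.sup_eq_union, Finset.coe_union]
    exact Set.union_subset hx hy)
  -- choose retractions for each finite subfamily
  have hsel : ∀ A : ι, ∃ R : E → E,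
      R '' C = {x ∈ C | ∀ T ∈ (A.1 : Set (E → E)), T x = x} ∧
      (∀ x ∈ {x ∈ C | ∀ T ∈ (A.1 : Set (E → E)), T x = x}, R x = x) ∧
      ∀ x ∈ C, ∀ y ∈ C, ‖R x - R y‖ ≤ ‖x - y‖ := by
    intro A
    obtain ⟨-, -, R, h1, h2, h3⟩ := hfin ↑A.1 A.2 A.1.finite_toSet
    exact ⟨R, h1, h2, h3⟩
  choose r hr1 hr2 hr3 using hsel
  have hrfix : ∀ A : ι, ∀ x ∈ C,
      r A x ∈ {x ∈ C | ∀ T ∈ (A.1 : Set (E → E)), T x = x} := by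
    intro A x hx
    rw [← hr1 A]; exact Set.mem_image_of_mem _ hx
  -- an ultrafilter refining the directed order filter
  set U : Ultrafilter ι := Ultrafilter.of Filter.atTop with hU
  have hUle : (U : Filter ι) ≤ Filter.atTop := Ultrafilter.of_le _
  -- pointwise limits along U exist, in C
  have hlim : ∀ x, x ∈ C → ∃ a ∈ C, Filter.Tendsto (fun A => r A x) ↑U (nhds a) := by
    intro x hx
    have hP : Filter.Tendsto (fun A => r A x) ↑U (Filter.principal C) :=
      Filter.tendsto_principal.2 (Filter.Eventually.of_forall fun A => (hrfix A x hx).1)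
    obtain ⟨a, ha, hle⟩ := hC.ultrafilter_le_nhds (U.map fun A => r A x)
      (by rwa [Ultrafilter.coe_map])
    rw [Ultrafilter.coe_map] at hle
    exact ⟨a, ha, hle⟩
  choose! f hfC hft using hlim
  -- the limit map fixes every member of S on C
  have hfix : ∀ x ∈ C, ∀ T ∈ S, T (f x) = f x := by
    intro x hx T hT
    have hev : ∀ᶠ A : ι in ↑U, T ∈ A.1 :=
      hUle (Filter.eventually_atTop.2
        ⟨⟨{T}, by simpa using hT⟩, fun B hB => Finset.singleton_subset_iff.mp hB⟩)
    have h1 : Filter.Tendsto (fun A : ι => r A x) ↑U (nhdsWithin (f x) C) := by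
      rw [tendsto_nhdsWithin_iff]
      exact ⟨hft x hx, Filter.Eventually.of_forall fun A => (hrfix A x hx).1⟩
    have h2 : Filter.Tendsto (fun A : ι => T (r A x)) ↑U (nhds (T (f x))) :=
      ((hcont T hT (f x) (hfC x hx)).tendsto).comp h1
    have h3 : Filter.Tendsto (fun A : ι => T (r A x)) ↑U (nhds (f x)) := by
      refine (hft x hx).congr' ?_
      filter_upwards [hev] with A hA
      exact ((hrfix A x hx).2 T (Finset.mem_coe.2 hA)).symm
    exact tendsto_nhds_unique h2 h3
  -- the limit map is the identity on Fix S
  have hid : ∀ x ∈ {x ∈ C | ∀ T ∈ S, T x = x}, f x = x := by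
    intro x hx
    have hall : ∀ A : ι, r A x = x :=
      fun A => hr2 A x ⟨hx.1, fun T hT => hx.2 T (A.2 hT)⟩
    have h1 := hft x hx.1
    rw [show (fun A : ι => r A x) = fun _ => x from funext hall] at h1
    exact tendsto_nhds_unique h1 tendsto_const_nhds
  -- the limit map is nonexpansive on C
  have hnon : ∀ x ∈ C, ∀ y ∈ C, ‖f x - f y‖ ≤ ‖x - y‖ := by
    intro x hx y hy
    by_contra h
    push_neg at h
    have hevn : ∀ᶠ z in nhds (f x - f y), ‖x - y‖ < ‖z‖ := hlsc _ _ h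
    have htend : Filter.Tendsto (fun A : ι => r A x - r A y) ↑U (nhds (f x - f y)) :=
      (hft x hx).sub (hft y hy)
    obtain ⟨A, h1, h2⟩ :=
      ((htend.eventually hevn).and
        (Filter.Eventually.of_forall fun A : ι => hr3 A x hx y hy)).exists
    exact absurd h2 (not_le.2 h1)
  -- assemble
  refine ⟨⟨f x0, hfC x0 hx0, fun T hT => hfix x0 hx0 T hT⟩, fun x hx => hx.1,
    f, ?_, hid, hnon⟩
  apply Set.Subset.antisymm
  · rintro _ ⟨x, hx, rfl⟩
    exact ⟨hfC x hx, fun T hT => hfix x hx T hT⟩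
  · intro x hx
    exact ⟨x, hx.1, hid x hx⟩
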